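/- (k-th power block encoding.) Let H = Σ_{i,j} c_{ij} P(i,j) with λ = Σ|c_{ij}|, and for k ≥ 1 define on 2kn ancilla qubits |R_k⟩ = λ^{-k/2} Σ over k index pairs of ∏_{s=1}^{k} e^{i arg(c_{i_s j_s})} √|c_{i_s j_s}| |i_1⟩|j_1⟩⋯|i_k⟩|j_k⟩, similarly |L_k⟩ without the phases, and W_k acting by W_k(|i_1 j_1 ⋯ i_k j_k⟩ ⊗ φ) = |i_1 j_1 ⋯ i_k j_k⟩ ⊗ ∏_{s=k}^{1} P(i_s, j_s) φ (with P(i_k,j_k) leftmost). Then (⟨L_k| ⊗ I) W_k (|R_k⟩ ⊗ I) = λ^{-k} H^k as an operator on (ℂ²)^{⊗n}. -/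

import Mathlib

open Matrix

noncomputable section

/-- Pauli `X`. -/
def X : Matrix (Fin 2) (Fin 2) ℂ := !![0, 1; 1, 0]

/-- Pauli `Z`. -/
def Z : Matrix (Fin 2) (Fin 2) ℂ := !![1, 0; 0, -1]

/-- The `n`-qubit operator `P(i,j) = ⊗_{ℓ=0}^{n-1} Z^{j_ℓ} X^{i_ℓ}`. -/
def P (n : ℕ) (i j : Fin n → Fin 2) :
    Matrix (Fin n → Fin 2) (Fin n → Fin 2) ℂ :=
  fun x y => ∏ ℓ, (Z ^ (j ℓ : ℕ) * X ^ (i ℓ : ℕ)) (x ℓ) (y ℓ)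

/-- Ancilla index for the `k`-fold product: `k` pairs `(i_s, j_s)` of bit strings. -/
abbrev AncK (n k : ℕ) := Fin k → (Fin n → Fin 2) × (Fin n → Fin 2)

lemma aux {α : Type*} [Fintype α] {m : Type*} [Fintype m] [DecidableEq m]
    (f : α → ℂ) (M : α → Matrix m m ℂ) (k : ℕ) :
    ∑ b : Fin k → α, (∏ s, f (b s)) • (List.ofFn fun s => M (b s)).reverse.prod
      = (∑ a, f a • M a) ^ k := by
  induction k with
  | zero => simp
  | succ k ih =>
    rw [← (Fin.consEquiv fun _ : Fin (k+1) => α).sum_comp]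
    rw [Fintype.sum_prod_type]
    have key : ∀ x : α, ∀ g : Fin k → α,
        (∏ s, f ((Fin.consEquiv fun _ : Fin (k+1) => α) (x, g) s)) •
          (List.ofFn fun s => M ((Fin.consEquiv fun _ : Fin (k+1) => α) (x, g) s)).reverse.prod
        = ((∏ s, f (g s)) • (List.ofFn fun s => M (g s)).reverse.prod) * (f x • M x) := by
      intro x g
      simp only [Fin.consEquiv_apply, Fin.prod_univ_succ,
        Fin.cons_zero, Fin.cons_succ, List.ofFn_succ, List.reverse_cons, List.prod_append,
        List.prod_cons, List.prod_nil, mul_one, smul_mul_smul_comm]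
      rw [mul_comm]
    simp only [key]
    rw [Finset.sum_comm, ← Finset.sum_mul_sum, ih, ← pow_succ]

/-- `k`-th power block encoding: with `H = Σ_{i,j} c_{ij} P(i,j)`,
`λ = Σ|c_{ij}| > 0`, right/left states `|R_k⟩, |L_k⟩` on `2kn` ancillas and the
select unitary `W_k` applying `∏_{s=k}^{1} P(i_s,j_s)` (with `P(i_k,j_k)` leftmost),
one has `(⟨L_k| ⊗ I) W_k (|R_k⟩ ⊗ I) = λ^{-k} H^k` as an operator. -/
theorem stmt11 (n k : ℕ) (hk : 1 ≤ k)
    (c : (Fin n → Fin 2) → (Fin n → Fin 2) → ℂ)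
    (lam : ℝ) (hlam : lam = ∑ i, ∑ j, ‖c i j‖) (hpos : 0 < lam)
    (Rk Lk : AncK n k → ℂ)
    (hR : Rk = fun a => ((Real.sqrt lam : ℂ) ^ k)⁻¹ *
      ∏ s : Fin k, (Complex.exp (Complex.I * (c (a s).1 (a s).2).arg) *
        (Real.sqrt (‖c (a s).1 (a s).2‖) : ℂ)))
    (hL : Lk = fun a => ((Real.sqrt lam : ℂ) ^ k)⁻¹ *
      ∏ s : Fin k, (Real.sqrt (‖c (a s).1 (a s).2‖) : ℂ))
    (Wk : Matrix (AncK n k × (Fin n → Fin 2)) (AncK n k × (Fin n → Fin 2)) ℂ)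
    (hW : Wk = fun x y => if x.1 = y.1 then
      ((List.ofFn fun s : Fin k => P n (y.1 s).1 (y.1 s).2).reverse.prod) x.2 y.2
      else 0) :
    (fun u v => ∑ a : AncK n k, ∑ b : AncK n k,
        (starRingEnd ℂ) (Lk a) * Wk (a, u) (b, v) * Rk b)
    = ((lam : ℂ) ^ k)⁻¹ • ((∑ i, ∑ j, c i j • P n i j) ^ k) := by
  subst hR hL hW
  have hsum : (∑ i, ∑ j, c i j • P n i j) =
      ∑ p : (Fin n → Fin 2) × (Fin n → Fin 2), c p.1 p.2 • P n p.1 p.2 := by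
    rw [Fintype.sum_prod_type]
  funext u v
  -- collapse the diagonal Wk
  have h1 : ∀ a : AncK n k,
      (∑ b : AncK n k, (starRingEnd ℂ) (((Real.sqrt lam : ℂ) ^ k)⁻¹ *
          ∏ s : Fin k, (Real.sqrt (‖c (a s).1 (a s).2‖) : ℂ)) *
        (if a = b then ((List.ofFn fun s : Fin k => P n (b s).1 (b s).2).reverse.prod) u v else 0) *
        (((Real.sqrt lam : ℂ) ^ k)⁻¹ *
          ∏ s : Fin k, (Complex.exp (Complex.I * (c (b s).1 (b s).2).arg) *
            (Real.sqrt (‖c (b s).1 (b s).2‖) : ℂ))))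
      = ((lam : ℂ) ^ k)⁻¹ * ((∏ s : Fin k, c (a s).1 (a s).2) *
          ((List.ofFn fun s : Fin k => P n (a s).1 (a s).2).reverse.prod) u v) := by
    intro a
    rw [Finset.sum_eq_single a]
    · rw [if_pos rfl]
      have hterm : ∀ s : Fin k,
          (starRingEnd ℂ) ((Real.sqrt (‖c (a s).1 (a s).2‖) : ℂ)) *
          (Complex.exp (Complex.I * (c (a s).1 (a s).2).arg) *
            (Real.sqrt (‖c (a s).1 (a s).2‖) : ℂ)) = c (a s).1 (a s).2 := by
        intro s
        rw [Complex.conj_ofReal]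
        set z := c (a s).1 (a s).2
        have hss : ((Real.sqrt (‖z‖) : ℂ)) * (Real.sqrt (‖z‖) : ℂ)
            = ((‖z‖ : ℂ)) := by
          norm_cast
          exact Real.mul_self_sqrt (norm_nonneg z)
        calc ((Real.sqrt (‖z‖) : ℂ)) * (Complex.exp (Complex.I * z.arg) *
              (Real.sqrt (‖z‖) : ℂ))
            = (((Real.sqrt (‖z‖) : ℂ)) * (Real.sqrt (‖z‖) : ℂ)) *
              Complex.exp (z.arg * Complex.I) := by rw [mul_comm Complex.I]; ring
          _ = ((‖z‖ : ℂ)) * Complex.exp (z.arg * Complex.I) := by rw [hss]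
          _ = z := Complex.norm_mul_exp_arg_mul_I z
      have hinv : (starRingEnd ℂ) (((Real.sqrt lam : ℂ) ^ k)⁻¹) * ((Real.sqrt lam : ℂ) ^ k)⁻¹
          = ((lam : ℂ) ^ k)⁻¹ := by
        rw [map_inv₀, map_pow, Complex.conj_ofReal, ← mul_inv, ← mul_pow]
        norm_cast
        rw [Real.mul_self_sqrt hpos.le]
      rw [_root_.map_mul, map_prod]
      calc (starRingEnd ℂ) (((Real.sqrt lam : ℂ) ^ k)⁻¹) *
            (∏ s : Fin k, (starRingEnd ℂ) ((Real.sqrt (‖c (a s).1 (a s).2‖) : ℂ))) *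
            ((List.ofFn fun s : Fin k => P n (a s).1 (a s).2).reverse.prod) u v *
            (((Real.sqrt lam : ℂ) ^ k)⁻¹ *
              ∏ s : Fin k, (Complex.exp (Complex.I * (c (a s).1 (a s).2).arg) *
                (Real.sqrt (‖c (a s).1 (a s).2‖) : ℂ)))
          = ((starRingEnd ℂ) (((Real.sqrt lam : ℂ) ^ k)⁻¹) * ((Real.sqrt lam : ℂ) ^ k)⁻¹) *
            ((∏ s : Fin k, ((starRingEnd ℂ) ((Real.sqrt (‖c (a s).1 (a s).2‖) : ℂ)) *
                (Complex.exp (Complex.I * (c (a s).1 (a s).2).arg) *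
                  (Real.sqrt (‖c (a s).1 (a s).2‖) : ℂ)))) *
              ((List.ofFn fun s : Fin k => P n (a s).1 (a s).2).reverse.prod) u v) := by
            simp only [Finset.prod_mul_distrib]; ring
        _ = _ := by
            rw [hinv]
            congr 2
            exact Finset.prod_congr rfl fun s _ => hterm s
    · intro b _ hb
      rw [if_neg (Ne.symm hb)]
      ring
    · intro h; exact absurd (Finset.mem_univ a) h
  simp only [h1]
  rw [← Finset.mul_sum]
  have h2 := congrFun (congrFun (aux (fun p : (Fin n → Fin 2) × (Fin n → Fin 2) => c p.1 p.2)
      (fun p => P n p.1 p.2) k) u) v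
  rw [hsum, Matrix.smul_apply, ← h2, Matrix.sum_apply]
  simp only [Matrix.smul_apply, smul_eq_mul]
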